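/- Every positive (10,9)-reverse multiple M satisfies M ≡ 89 (mod 100), and its big-endian decimal expansion begins with the digits 1, 0; that is, the two most significant decimal digits of M are 1 and 0 and the two least significant digits are 8 and 9. -/

import Mathlib

lemma digit_getD (i m : ℕ) : (Nat.digits 10 m).getD i 0 = m / 10 ^ i % 10 := by
  induction i generalizing m with
  | zero =>
    rcases Nat.eq_zero_or_pos m with rfl | hm
    · simp
    · rw [Nat.digits_def' (by norm_num : 1 < 10) hm]; simp
  | succ i ih =>
    rcases Nat.eq_zero_or_pos m with rfl | hm
    · simp
    · rw [Nat.digits_def' (by norm_num : 1 < 10) hm]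
      simp only [List.getD_cons_succ]
      rw [ih, Nat.div_div_eq_div_mul, pow_succ, mul_comm]

/-- Every positive `(10, 9)`-reverse multiple `M` satisfies `M ≡ 89 [MOD 100]`, and its
big-endian decimal expansion begins with the digits `1, 0`. -/
theorem stmt_15 (M : ℕ) (hM : 0 < M)
    (hrev : (Nat.digits 10 M).reverse = Nat.digits 10 (9 * M)) :
    M % 100 = 89 ∧ ((Nat.digits 10 M).reverse).take 2 = [1, 0] := by
  set n := (Nat.digits 10 M).length with hn
  have hn1 : 1 ≤ n := by
    have := (Nat.digits_ne_nil_iff_ne_zero (b := 10)).mpr hM.ne'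
    rw [hn]; exact List.length_pos_iff.mpr this
  have hlen : (Nat.digits 10 (9 * M)).length = n := by
    rw [← hrev, List.length_reverse]
  -- key digit relation
  have key : ∀ i, i < n → 9 * M / 10 ^ i % 10 = M / 10 ^ (n - 1 - i) % 10 := by
    intro i hi
    have h1 : (Nat.digits 10 (9 * M)).getD i 0 = ((Nat.digits 10 M).reverse).getD i 0 := by
      rw [hrev]
    rw [digit_getD] at h1
    rw [h1]
    have hi' : i < (Nat.digits 10 M).reverse.length := by
      rw [List.length_reverse]; exact hi
    rw [List.getD_eq_getElem _ _ hi', List.getElem_reverse,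
      ← List.getD_eq_getElem _ 0, digit_getD]
  -- bounds
  have hMu : 9 * M < 10 ^ n := by
    rw [← hlen]; exact Nat.lt_base_pow_length_digits (by norm_num)
  have hMl : 10 ^ (n - 1) ≤ M := by
    have h := Nat.base_pow_length_digits_le 10 M (by norm_num) hM.ne'
    rw [← hn] at h
    have hpow : 10 ^ n = 10 * 10 ^ (n - 1) := by
      have h2 : (10:ℕ) ^ n = 10 ^ ((n - 1) + 1) := by congr 1; omega
      rw [h2, pow_succ]; ring
    rw [hpow] at h
    omega
  -- rule out n = 1
  have hn2 : 2 ≤ n := by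
    by_contra h
    have hn1' : n = 1 := by omega
    have e0 := key 0 (by omega)
    simp [hn1'] at e0 hMu hMl
    omega
  set Q := 10 ^ (n - 2) with hQ
  have hQ0 : 0 < Q := Nat.pow_pos (by norm_num)
  have hP : 10 ^ (n - 1) = 10 * Q := by
    have h2 : (10:ℕ) ^ (n - 1) = 10 ^ ((n - 2) + 1) := by congr 1; omega
    rw [h2, pow_succ, hQ]; ring
  have hPn : 10 ^ n = 100 * Q := by
    have h2 : 10 ^ n = 10 ^ (n - 2) * 10 ^ 2 := by rw [← pow_add]; congr 1; omega
    rw [h2, hQ]; ring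
  rw [hP] at hMl
  rw [hPn] at hMu
  -- digit equations
  have e0 := key 0 (by omega)
  rw [show n - 1 - 0 = n - 1 by omega, hP] at e0
  simp only [pow_zero, Nat.div_one] at e0
  have e1 := key 1 (by omega)
  rw [show n - 1 - 1 = n - 2 by omega, ← hQ] at e1
  simp only [pow_one] at e1
  have e2 := key (n - 2) (by omega)
  rw [show n - 1 - (n - 2) = 1 by omega, ← hQ] at e2
  simp only [pow_one] at e2
  -- M / (10*Q) = 1
  have hd1 : M / (10 * Q) = 1 := by
    have hle : 1 ≤ M / (10 * Q) := (Nat.le_div_iff_mul_le (by omega)).mpr (by omega)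
    have hlt : M / (10 * Q) < 2 := (Nat.div_lt_iff_lt_mul (by omega)).mpr (by omega)
    omega
  rw [hd1] at e0
  have hM10 : M % 10 = 9 := by omega
  -- q = M / Q ∈ {10, 11}
  have hq10 : 10 ≤ M / Q := (Nat.le_div_iff_mul_le hQ0).mpr (by omega)
  have hq12 : M / Q < 12 := (Nat.div_lt_iff_lt_mul hQ0).mpr (by omega)
  have hcase : M / Q = 10 ∨ M / Q = 11 := by omega
  have hq : M / Q = 10 := by
    rcases hcase with h | h
    · exact h
    · exfalso
      have h11 : 11 * Q ≤ M := by
        have := Nat.div_mul_le_self M Q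
        rw [h] at this; omega
      have hu1 : 99 ≤ 9 * M / Q := (Nat.le_div_iff_mul_le hQ0).mpr (by omega)
      have hu2 : 9 * M / Q < 100 := (Nat.div_lt_iff_lt_mul hQ0).mpr (by omega)
      rw [h] at e1
      omega
  rw [hq] at e1
  have h89 : M % 100 = 89 := by omega
  refine ⟨h89, ?_⟩
  rw [hrev]
  have h9M : 0 < 9 * M := by omega
  have h9M10 : 0 < 9 * M / 10 := by
    have : 100 ≤ M := by omega
    omega
  rw [Nat.digits_def' (by norm_num : 1 < 10) h9M,
    Nat.digits_def' (by norm_num : 1 < 10) h9M10]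
  simp only [List.take_cons, List.take]
  have : 9 * M % 10 = 1 := by omega
  have : 9 * M / 10 % 10 = 0 := by omega
  simp_all
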